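/- arXiv:1912.05039 — 4 statements merged into one kernel-verified Lean document; each statement's English description precedes it below -/
import Mathlib

section
/- Let ν > 0 and let F : ℂ → ℂ be an entire function with Taylor expansion F(z) = ∑_{j=0}^∞ a_j z^j. Then, as an identity in [0, ∞], ∫_ℂ |F(z)|² e^{−ν|z|²} dλ(z) = (π/ν) ∑_{j=0}^∞ (j!/ν^j) |a_j|². -/
open MeasureTheory

section MyAux

open Set Real


theorem my_lintegral_polar (g : ℝ × ℝ → ENNReal) :
    (∫⁻ p in polarCoord.target, ENNReal.ofReal p.1 * g (polarCoord.symm p)) = ∫⁻ p, g p := by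
  set B : ℝ × ℝ → ℝ × ℝ →L[ℝ] ℝ × ℝ := fun p =>
    LinearMap.toContinuousLinearMap (Matrix.toLin (Module.Basis.finTwoProd ℝ) (Module.Basis.finTwoProd ℝ)
      !![Real.cos p.2, -p.1 * Real.sin p.2; Real.sin p.2, p.1 * Real.cos p.2])
  have A : ∀ p ∈ polarCoord.target, HasFDerivWithinAt polarCoord.symm (B p) polarCoord.target p :=
    fun p _ => (hasFDerivAt_polarCoord_symm p).hasFDerivWithinAt
  have B_det : ∀ p, (B p).det = p.1 := by
    intro p
    conv_rhs => rw [← one_mul p.1, ← cos_sq_add_sin_sq p.2]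
    simp only [B, neg_mul, LinearMap.det_toContinuousLinearMap, LinearMap.det_toLin,
      Matrix.det_fin_two_of, sub_neg_eq_add]
    ring
  symm
  calc
    ∫⁻ p, g p = ∫⁻ p in polarCoord.source, g p := by
      rw [← setLIntegral_univ]
      exact setLIntegral_congr polarCoord_source_ae_eq_univ.symm
    _ = ∫⁻ p in polarCoord.symm '' polarCoord.target, g p := by
      rw [polarCoord.symm_image_target_eq_source]
    _ = ∫⁻ p in polarCoord.target, ENNReal.ofReal |(B p).det| * g (polarCoord.symm p) := by
      exact lintegral_image_eq_lintegral_abs_det_fderiv_mul volume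
        polarCoord.open_target.measurableSet A polarCoord.symm.injOn g
    _ = ∫⁻ p in polarCoord.target, ENNReal.ofReal p.1 * g (polarCoord.symm p) := by
      refine setLIntegral_congr_fun polarCoord.open_target.measurableSet
        (fun p hp => ?_)
      rw [B_det, abs_of_pos hp.1]

theorem my_lintegral_polar_complex (g : ℂ → ENNReal) :
    (∫⁻ p in polarCoord.target, ENNReal.ofReal p.1 * g (Complex.polarCoord.symm p)) =
      ∫⁻ z, g z := by
  rw [← (Complex.volume_preserving_equiv_real_prod.symm).lintegral_comp_emb
    Complex.measurableEquivRealProd.symm.measurableEmbedding, ← my_lintegral_polar]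
  rfl


theorem my_summable_aux (F : ℂ → ℂ) (a : ℕ → ℂ)
    (ha : ∀ z : ℂ, HasSum (fun j : ℕ => a j * z ^ j) (F z)) (r : ℝ) (hr : 0 ≤ r) :
    Summable (fun j : ℕ => ‖a j‖ * r ^ j) := by
  have h := (ha ((r : ℂ))).summable
  rw [← summable_norm_iff] at h
  refine h.congr fun j => ?_
  simp [norm_mul, norm_pow, Complex.norm_real, _root_.abs_of_nonneg hr]

theorem my_parseval (F : ℂ → ℂ) (a : ℕ → ℂ)
    (ha : ∀ z : ℂ, HasSum (fun j : ℕ => a j * z ^ j) (F z)) (r : ℝ) (hr : 0 ≤ r) :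
    HasSum (fun j : ℕ => 2 * π * (‖a j‖ ^ 2 * r ^ (2 * j)))
      (∫ θ in Ioo (-π) π, ‖F ((r : ℂ) * Complex.exp (θ * Complex.I))‖ ^ 2) := by
  set w : ℝ → ℂ := fun θ => (r : ℂ) * Complex.exp (θ * Complex.I) with hw
  have hnw : ∀ θ, ‖w θ‖ = r := by
    intro θ
    simp [hw, map_mul, Complex.norm_exp, Complex.norm_real,
      _root_.abs_of_nonneg hr]
  set G : ℕ × ℕ → ℝ → ℂ := fun p θ => (a p.1 * w θ ^ p.1) * (starRingEnd ℂ) (a p.2 * w θ ^ p.2)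
    with hG
  have hGnorm : ∀ p θ, ‖G p θ‖ = (‖a p.1‖ * r ^ p.1) * (‖a p.2‖ * r ^ p.2) := by
    intro p θ
    simp [hG, norm_mul, norm_pow, hnw θ]
  have hsum1 : Summable (fun j => ‖a j‖ * r ^ j) := my_summable_aux F a ha r hr
  have hsum2 : Summable (fun p : ℕ × ℕ => (‖a p.1‖ * r ^ p.1) * (‖a p.2‖ * r ^ p.2)) :=
    hsum1.mul_of_nonneg hsum1 (fun j => by positivity) (fun j => by positivity)
  have hptw : ∀ θ : ℝ, HasSum (fun p : ℕ × ℕ => G p θ)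
      (((‖F (w θ)‖ ^ 2 : ℝ) : ℂ)) := by
    intro θ
    have h1 := ha (w θ)
    have h2 : HasSum (fun k : ℕ => (starRingEnd ℂ) (a k * w θ ^ k)) ((starRingEnd ℂ) (F (w θ))) :=
      Complex.hasSum_conj'.mpr h1
    have hs : Summable (fun p : ℕ × ℕ => (a p.1 * w θ ^ p.1) *
        (starRingEnd ℂ) (a p.2 * w θ ^ p.2)) := by
      rw [← summable_norm_iff]
      refine hsum2.congr fun p => ?_
      rw [← hGnorm p θ]
    have h3 := h1.mul h2 hs
    have e : ((‖F (w θ)‖ ^ 2 : ℝ) : ℂ) = F (w θ) * (starRingEnd ℂ) (F (w θ)) := by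
      rw [Complex.mul_conj, Complex.normSq_eq_norm_sq]
    rw [e]; exact h3
  -- integrability of each G p on Ioo (-π) π
  have hGcont : ∀ p : ℕ × ℕ, Continuous (G p) := by
    intro p
    apply Continuous.mul
    · exact continuous_const.mul ((continuous_const.mul
        (Complex.continuous_exp.comp (Complex.continuous_ofReal.mul continuous_const))).pow _)
    · exact Complex.continuous_conj.comp (continuous_const.mul ((continuous_const.mul
        (Complex.continuous_exp.comp (Complex.continuous_ofReal.mul continuous_const))).pow _))
  have hGint : ∀ p : ℕ × ℕ, IntegrableOn (G p) (Ioo (-π) π) := fun p =>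
    ((hGcont p).integrableOn_Icc).mono_set Ioo_subset_Icc_self
  have hmeas : volume (Ioo (-π : ℝ) π) = ENNReal.ofReal (2 * π) := by
    rw [volume_Ioo]; congr 1; ring
  have hnormint : ∀ p : ℕ × ℕ, ∫ θ in Ioo (-π) π, ‖G p θ‖ =
      (2 * π) * ((‖a p.1‖ * r ^ p.1) * (‖a p.2‖ * r ^ p.2)) := by
    intro p
    simp_rw [hGnorm p]
    rw [setIntegral_const, measureReal_def, hmeas, ENNReal.toReal_ofReal (by positivity), smul_eq_mul]
  have hF_sum : Summable fun p : ℕ × ℕ => ∫ θ in Ioo (-π) π, ‖G p θ‖ := by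
    simp_rw [hnormint]
    exact hsum2.mul_left _
  have key := hasSum_integral_of_summable_integral_norm hGint hF_sum
  -- rewrite the value of key
  have hval : (∫ θ in Ioo (-π) π, (∑' p : ℕ × ℕ, G p θ)) =
      ∫ θ in Ioo (-π) π, ((‖F (w θ)‖ ^ 2 : ℝ) : ℂ) :=
    setIntegral_congr_fun measurableSet_Ioo fun θ _ => (hptw θ).tsum_eq
  rw [hval, show (∫ θ in Ioo (-π) π, ((‖F (w θ)‖ ^ 2 : ℝ) : ℂ)) =
    ((∫ θ in Ioo (-π) π, ‖F (w θ)‖ ^ 2 : ℝ) : ℂ) from integral_ofReal] at key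
  -- compute the individual integrals
  have hcalc : ∀ p : ℕ × ℕ, (∫ θ in Ioo (-π) π, G p θ) =
      if p.1 = p.2 then ((2 * π * (‖a p.1‖ ^ 2 * r ^ (2 * p.1)) : ℝ) : ℂ) else 0 := by
    rintro ⟨j, k⟩
    have hGeq : ∀ θ : ℝ, G (j, k) θ =
        (a j * (starRingEnd ℂ) (a k) * (r : ℂ) ^ (j + k)) *
          Complex.exp ((((j : ℂ) - k) * Complex.I) * θ) := by
      intro θ
      simp only [hG, hw]
      rw [map_mul, map_pow, map_mul, Complex.conj_ofReal, ← Complex.exp_conj, map_mul,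
        Complex.conj_ofReal, Complex.conj_I, mul_pow, mul_pow, ← Complex.exp_nat_mul,
        ← Complex.exp_nat_mul, pow_add]
      have hE : Complex.exp ((j : ℂ) * (↑θ * Complex.I)) *
          Complex.exp ((k : ℂ) * (↑θ * -Complex.I)) =
          Complex.exp (((j : ℂ) - k) * Complex.I * ↑θ) := by
        rw [← Complex.exp_add]; congr 1; ring
      linear_combination (a j * (starRingEnd ℂ) (a k) * (r : ℂ) ^ j * (r : ℂ) ^ k) * hE
    have hIoo : (∫ θ in Ioo (-π) π, G (j, k) θ) = ∫ θ in (-π)..π, G (j, k) θ := by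
      rw [intervalIntegral.integral_of_le (by linarith [Real.pi_pos]),
        integral_Ioc_eq_integral_Ioo]
    rw [hIoo]
    by_cases hjk : j = k
    · subst hjk
      simp only [if_pos rfl]
      have hthis : ∀ θ : ℝ, G (j, j) θ = ((‖a j‖ ^ 2 * r ^ (2 * j) : ℝ) : ℂ) := by
        intro θ
        rw [hGeq θ]
        simp only [sub_self, zero_mul, Complex.exp_zero, mul_one]
        rw [Complex.mul_conj, Complex.normSq_eq_norm_sq]
        push_cast
        rw [two_mul, pow_add]
      rw [intervalIntegral.integral_congr (fun θ _ => hthis θ)]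
      rw [intervalIntegral.integral_const, Complex.real_smul]
      push_cast
      try ring
    · simp only [if_neg hjk]
      have hc : ((j : ℂ) - k) * Complex.I ≠ 0 := by
        simp only [ne_eq, mul_eq_zero, Complex.I_ne_zero, or_false, sub_eq_zero]
        exact_mod_cast hjk
      rw [intervalIntegral.integral_congr (fun θ _ => hGeq θ)]
      rw [intervalIntegral.integral_const_mul, integral_exp_mul_complex hc]
      have hexp : Complex.exp ((((j : ℂ) - k) * Complex.I) * (π : ℝ)) =
          Complex.exp ((((j : ℂ) - k) * Complex.I) * ((-π : ℝ) : ℂ)) := by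
        have h2pi := Complex.exp_int_mul_two_pi_mul_I ((j : ℤ) - k)
        push_cast at h2pi
        calc Complex.exp ((((j : ℂ) - k) * Complex.I) * (π : ℝ))
            = Complex.exp ((((j : ℂ) - k) * Complex.I) * ((-π : ℝ) : ℂ)) *
              Complex.exp (((j : ℂ) - k) * (2 * (π : ℂ) * Complex.I)) := by
              rw [← Complex.exp_add]; congr 1; push_cast; ring
          _ = _ := by rw [h2pi, mul_one]
      rw [hexp]
      simp
  simp_rw [hcalc] at key
  have hinj : Function.Injective (fun j : ℕ => ((j, j) : ℕ × ℕ)) := fun x y h => by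
    simpa using congrArg Prod.fst h
  have hside : ∀ p : ℕ × ℕ, p ∉ Set.range (fun j : ℕ => ((j, j) : ℕ × ℕ)) →
      (if p.1 = p.2 then ((2 * π * (‖a p.1‖ ^ 2 * r ^ (2 * p.1)) : ℝ) : ℂ) else 0) = 0 := by
    rintro ⟨x, y⟩ hp
    have hxy : x ≠ y := fun h => hp ⟨x, by simp [h]⟩
    simp only [if_neg hxy]
  have key3 := (hinj.hasSum_iff hside).mpr key
  simp only [Function.comp_def, if_pos rfl] at key3
  exact Complex.hasSum_ofReal.mp key3


theorem my_radial (ν : ℝ) (hν : 0 < ν) (c : ℝ) (hc : 0 ≤ c) (j : ℕ) :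
    ∫⁻ r in Ioi (0:ℝ), ENNReal.ofReal (r * rexp (-ν * r ^ 2)) *
      ENNReal.ofReal (2 * π * (c * r ^ (2 * j))) =
      ENNReal.ofReal (π / ν) * ENNReal.ofReal ((j.factorial : ℝ) / ν ^ j * c) := by
  have hπ := Real.pi_pos
  have h1 : ∀ r ∈ Ioi (0:ℝ), ENNReal.ofReal (r * rexp (-ν * r ^ 2)) *
      ENNReal.ofReal (2 * π * (c * r ^ (2 * j))) =
      ENNReal.ofReal (2 * π * c) * ENNReal.ofReal (r ^ (2 * j + 1) * rexp (-ν * r ^ 2)) := by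
    intro r hr
    have hr' : (0:ℝ) < r := hr
    rw [← ENNReal.ofReal_mul (by positivity), ← ENNReal.ofReal_mul (by positivity)]
    congr 1
    ring
  rw [setLIntegral_congr_fun measurableSet_Ioi h1,
    lintegral_const_mul' _ _ ENNReal.ofReal_ne_top]
  have heq : ∀ r ∈ Ioi (0:ℝ), r ^ (((2 * j + 1 : ℕ)) : ℝ) * rexp (-ν * r ^ (2:ℝ)) =
      r ^ (2 * j + 1) * rexp (-ν * r ^ 2) := by
    intro r hr
    rw [show (2:ℝ) = ((2:ℕ):ℝ) by norm_num, Real.rpow_natCast, Real.rpow_natCast]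
  have hint : IntegrableOn (fun r : ℝ => r ^ (2 * j + 1) * rexp (-ν * r ^ 2)) (Ioi 0) := by
    refine (integrableOn_rpow_mul_exp_neg_mul_rpow (s := ((2 * j + 1 : ℕ) : ℝ))
      (by have := Nat.cast_nonneg (α := ℝ) (2 * j + 1); linarith) two_pos hν).congr_fun (fun r hr => heq r hr) measurableSet_Ioi
  have hval : ∫ r in Ioi (0:ℝ), r ^ (2 * j + 1) * rexp (-ν * r ^ 2) =
      (1 / 2) * ((j.factorial : ℝ) / ν ^ (j + 1)) := by
    rw [← setIntegral_congr_fun measurableSet_Ioi (fun r hr => heq r hr)]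
    rw [integral_rpow_mul_exp_neg_mul_rpow two_pos
      (by have := Nat.cast_nonneg (α := ℝ) (2 * j + 1); linarith) hν]
    have h2 : ((((2 * j + 1 : ℕ)):ℝ) + 1) / 2 = (j:ℝ) + 1 := by push_cast; ring
    rw [neg_div, h2, Real.Gamma_nat_eq_factorial]
    rw [show -((j:ℝ) + 1) = -(((j + 1 : ℕ)) : ℝ) by push_cast; ring,
      Real.rpow_neg hν.le, Real.rpow_natCast]
    ring
  rw [← ofReal_integral_eq_lintegral_ofReal hint
    ((ae_restrict_iff' measurableSet_Ioi).mpr (ae_of_all _ fun r hr => by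
      have : (0:ℝ) < r := hr; positivity)), hval,
    ← ENNReal.ofReal_mul (by positivity), ← ENNReal.ofReal_mul (by positivity)]
  congr 1
  rw [pow_succ]
  field_simp

end MyAux

section MyMain
open Set Real

theorem stmt3 (ν : ℝ) (hν : 0 < ν) (F : ℂ → ℂ) (a : ℕ → ℂ)
    (hF : Differentiable ℂ F)
    (ha : ∀ z : ℂ, HasSum (fun j : ℕ => a j * z ^ j) (F z)) :
    ∫⁻ z : ℂ, ENNReal.ofReal (‖F z‖ ^ 2 * Real.exp (-ν * ‖z‖ ^ 2)) =
      ENNReal.ofReal (Real.pi / ν) *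
        ∑' j : ℕ, ENNReal.ofReal ((j.factorial : ℝ) / ν ^ j * ‖a j‖ ^ 2) := by
  have hπ := Real.pi_pos
  have hcF : Continuous F := hF.continuous
  rw [← my_lintegral_polar_complex
    (fun z => ENNReal.ofReal (‖F z‖ ^ 2 * Real.exp (-ν * ‖z‖ ^ 2)))]
  rw [polarCoord_target]
  have hstep1 : ∀ p : ℝ × ℝ, p ∈ Ioi (0:ℝ) ×ˢ Ioo (-π) π →
      ENNReal.ofReal p.1 * (fun z => ENNReal.ofReal (‖F z‖ ^ 2 * Real.exp (-ν * ‖z‖ ^ 2)))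
        (Complex.polarCoord.symm p) =
      ENNReal.ofReal p.1 *
        ENNReal.ofReal (‖F ((p.1 : ℂ) * Complex.exp ((p.2 : ℂ) * Complex.I))‖ ^ 2 *
          Real.exp (-ν * p.1 ^ 2)) := by
    rintro ⟨r, θ⟩ ⟨hr, hθ⟩
    simp only
    have habs : ‖Complex.polarCoord.symm (r, θ)‖ = r := by
      rw [Complex.norm_polarCoord_symm]
      exact abs_of_pos hr
    have hpt : Complex.polarCoord.symm (r, θ) = (r : ℂ) * Complex.exp ((θ : ℂ) * Complex.I) := by
      rw [Complex.polarCoord_symm_apply, Complex.exp_mul_I]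
      norm_cast
    rw [← hpt, habs]
  rw [setLIntegral_congr_fun (measurableSet_Ioi.prod measurableSet_Ioo) hstep1]
  have hcont : Measurable fun p : ℝ × ℝ => ENNReal.ofReal p.1 *
      ENNReal.ofReal (‖F ((p.1 : ℂ) * Complex.exp ((p.2 : ℂ) * Complex.I))‖ ^ 2 *
        Real.exp (-ν * p.1 ^ 2)) := by
    refine measurable_mul.comp (Measurable.prodMk ?_ ?_)
    · exact ENNReal.measurable_ofReal.comp measurable_fst
    · refine ENNReal.measurable_ofReal.comp (Continuous.measurable ?_)
      apply Continuous.mul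
      · exact ((hcF.comp ((Complex.continuous_ofReal.comp continuous_fst).mul
          (Complex.continuous_exp.comp ((Complex.continuous_ofReal.comp continuous_snd).mul
            continuous_const)))).norm.pow 2)
      · exact Real.continuous_exp.comp (continuous_const.mul ((continuous_pow 2).comp
          continuous_fst))
  rw [Measure.volume_eq_prod, ← Measure.prod_restrict, lintegral_prod _
    hcont.aemeasurable]
  have hinner : ∀ r ∈ Ioi (0:ℝ),
      (∫⁻ θ in Ioo (-π) π, ENNReal.ofReal r *
        ENNReal.ofReal (‖F ((r : ℂ) * Complex.exp ((θ : ℂ) * Complex.I))‖ ^ 2 *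
          Real.exp (-ν * r ^ 2))) =
      ∑' j : ℕ, ENNReal.ofReal (r * rexp (-ν * r ^ 2)) *
        ENNReal.ofReal (2 * π * (‖a j‖ ^ 2 * r ^ (2 * j))) := by
    intro r hr
    have hr' : (0:ℝ) < r := hr
    have hpar := my_parseval F a ha r hr'.le
    have hptwise : ∀ θ : ℝ, ENNReal.ofReal r *
        ENNReal.ofReal (‖F ((r : ℂ) * Complex.exp ((θ : ℂ) * Complex.I))‖ ^ 2 *
          Real.exp (-ν * r ^ 2)) =
        ENNReal.ofReal (r * rexp (-ν * r ^ 2)) *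
          ENNReal.ofReal (‖F ((r : ℂ) * Complex.exp ((θ : ℂ) * Complex.I))‖ ^ 2) := by
      intro θ
      rw [← ENNReal.ofReal_mul hr'.le, ← ENNReal.ofReal_mul (by positivity)]
      congr 1
      ring
    simp_rw [hptwise]
    rw [lintegral_const_mul' _ _ ENNReal.ofReal_ne_top]
    have hcont2 : Continuous fun θ : ℝ =>
        ‖F ((r : ℂ) * Complex.exp ((θ : ℂ) * Complex.I))‖ ^ 2 :=
      ((hcF.comp (continuous_const.mul (Complex.continuous_exp.comp
        (Complex.continuous_ofReal.mul continuous_const)))).norm.pow 2)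
    have hint2 : IntegrableOn (fun θ : ℝ =>
        ‖F ((r : ℂ) * Complex.exp ((θ : ℂ) * Complex.I))‖ ^ 2) (Ioo (-π) π) :=
      hcont2.integrableOn_Icc.mono_set Ioo_subset_Icc_self
    rw [← ofReal_integral_eq_lintegral_ofReal hint2 (ae_of_all _ fun θ => by positivity)]
    rw [← hpar.tsum_eq, ENNReal.ofReal_tsum_of_nonneg (fun j => by positivity) hpar.summable,
      ← ENNReal.tsum_mul_left]
  rw [setLIntegral_congr_fun measurableSet_Ioi hinner]
  have hmj : ∀ j : ℕ, AEMeasurable (fun x : ℝ => ENNReal.ofReal (x * rexp (-ν * x ^ 2)) *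
      ENNReal.ofReal (2 * π * (‖a j‖ ^ 2 * x ^ (2 * j)))) (volume.restrict (Ioi 0)) := by
    intro j
    refine Measurable.aemeasurable (measurable_mul.comp (Measurable.prodMk ?_ ?_))
    · refine ENNReal.measurable_ofReal.comp (Continuous.measurable ?_)
      exact continuous_id.mul (Real.continuous_exp.comp (continuous_const.mul
        (continuous_pow 2)))
    · refine ENNReal.measurable_ofReal.comp (Continuous.measurable ?_)
      exact continuous_const.mul (continuous_const.mul (continuous_pow (2 * j)))
  rw [lintegral_tsum hmj]
  rw [tsum_congr fun j => my_radial ν hν (‖a j‖ ^ 2) (by positivity) j]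
  rw [ENNReal.tsum_mul_left]

end MyMain
end

section
/- Let ν > 0, t > 0 and z, w ∈ ℂ. Then the series ∑_{k=0}^∞ e^{−ν t k} L_k(ν |z − w|²) converges and the heat kernel K_ν(t,z,w) := (π/ν) e^{ν z · conj(w)} ∑_{k=0}^∞ e^{−ν t k} L_k(ν |z − w|²) admits the closed form K_ν(t,z,w) = (π e^{ν z · conj(w)} / (ν (1 − e^{−ν t}))) · exp( −ν |z − w|² e^{−ν t} / (1 − e^{−ν t}) ). -/
open MeasureTheory

/-- The Laguerre polynomial `L_n(x) = ∑_{k=0}^n binom(n,k) (−x)^k / k!`. -/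
noncomputable def laguerre (n : ℕ) (x : ℝ) : ℝ :=
  ∑ k ∈ Finset.range (n + 1), (n.choose k : ℝ) * (-x) ^ k / (k.factorial : ℝ)

section aux

variable {r : ℝ}

lemma laguerre_row (hr0 : 0 < r) (hr1 : r < 1) (y : ℝ) (j : ℕ) :
    HasSum (fun m : ℕ => ((j + m).choose j : ℝ) * r ^ (j + m) * y ^ j / (j.factorial : ℝ))
      (y ^ j / (j.factorial : ℝ) * (r ^ j / (1 - r) ^ (j + 1))) := by
  have hrn : ‖r‖ < 1 := by
    rw [Real.norm_eq_abs, abs_of_pos hr0]; exact hr1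
  have h := (hasSum_choose_mul_geometric_of_norm_lt_one j hrn).mul_left
    (y ^ j / (j.factorial : ℝ) * r ^ j)
  have hfun : (fun m : ℕ => ((j + m).choose j : ℝ) * r ^ (j + m) * y ^ j / (j.factorial : ℝ)) =
      fun m : ℕ => y ^ j / (j.factorial : ℝ) * r ^ j * (((m + j).choose j : ℝ) * r ^ m) := by
    funext m
    rw [Nat.add_comm j m, pow_add]
    ring
  have hval : y ^ j / (j.factorial : ℝ) * (r ^ j / (1 - r) ^ (j + 1)) =
      y ^ j / (j.factorial : ℝ) * r ^ j * (1 / (1 - r) ^ (j + 1)) := by ring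
  rw [hfun, hval]
  exact h

lemma laguerre_genfun (hr0 : 0 < r) (hr1 : r < 1) (x : ℝ) :
    HasSum (fun n : ℕ => r ^ n * laguerre n x)
      ((1 - r)⁻¹ * Real.exp (-x * r / (1 - r))) := by
  have h1r : (0:ℝ) < 1 - r := by linarith
  set g : ℕ × ℕ → ℝ :=
    fun p => ((p.1 + p.2).choose p.1 : ℝ) * r ^ (p.1 + p.2) * (-x) ^ p.1 / (p.1.factorial : ℝ)
    with hg_def
  have habs_eq : ∀ p : ℕ × ℕ,
      |g p| = ((p.1 + p.2).choose p.1 : ℝ) * r ^ (p.1 + p.2) * |x| ^ p.1 / (p.1.factorial : ℝ) := by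
    intro p
    rw [hg_def]
    rw [abs_div, abs_mul, abs_mul, abs_pow, abs_pow, abs_neg,
      abs_of_pos hr0, Nat.abs_cast, Nat.abs_cast]
  -- summability of |g|
  have habs : Summable fun p : ℕ × ℕ => |g p| := by
    rw [summable_prod_of_nonneg (fun p => abs_nonneg _)]
    constructor
    · intro j
      refine (laguerre_row hr0 hr1 |x| j).summable.congr fun m => ?_
      rw [habs_eq]
    · have hbase : Summable fun j : ℕ =>
          (1 - r)⁻¹ * ((|x| * r / (1 - r)) ^ j / (j.factorial : ℝ)) :=
        (Real.summable_pow_div_factorial (|x| * r / (1 - r))).mul_left _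
      refine hbase.congr fun j => ?_
      rw [tsum_congr (fun m => (habs_eq (j, m)))]
      rw [(laguerre_row hr0 hr1 |x| j).tsum_eq]
      have hf : (j.factorial : ℝ) ≠ 0 := Nat.cast_ne_zero.mpr j.factorial_ne_zero
      have h1 : (1 - r) ≠ 0 := ne_of_gt h1r
      rw [div_pow, mul_pow, pow_succ]
      field_simp
  have hg : Summable g := summable_abs_iff.mp habs
  -- value of the iterated sum
  have hexp : HasSum (fun j : ℕ => (-x) ^ j / (j.factorial : ℝ) * (r ^ j / (1 - r) ^ (j + 1)))
      ((1 - r)⁻¹ * Real.exp (-x * r / (1 - r))) := by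
    have h := (NormedSpace.expSeries_div_hasSum_exp (-x * r / (1 - r))).mul_left (1 - r)⁻¹
    rw [← Real.exp_eq_exp_ℝ] at h
    have hfun : (fun j : ℕ => (-x) ^ j / (j.factorial : ℝ) * (r ^ j / (1 - r) ^ (j + 1))) =
        fun j : ℕ => (1 - r)⁻¹ * ((-x * r / (1 - r)) ^ j / (j.factorial : ℝ)) := by
      funext j
      have h1 : (1 - r) ≠ 0 := ne_of_gt h1r
      have hf : (j.factorial : ℝ) ≠ 0 := Nat.cast_ne_zero.mpr j.factorial_ne_zero
      rw [div_pow, mul_pow, pow_succ]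
      field_simp
    rw [hfun]
    exact h
  have hts : ∑' p : ℕ × ℕ, g p = (1 - r)⁻¹ * Real.exp (-x * r / (1 - r)) := by
    rw [Summable.tsum_prod hg]
    rw [tsum_congr (fun j => (laguerre_row hr0 hr1 (-x) j).tsum_eq)]
    exact hexp.tsum_eq
  -- regroup along antidiagonals
  have hgs : Summable fun p : (Σ n : ℕ, Finset.HasAntidiagonal.antidiagonal n) => g (p.2 : ℕ × ℕ) :=
    Finset.HasAntidiagonal.sigmaAntidiagonalEquivProd.summable_iff.mpr hg
  have hdiag : Summable fun n : ℕ => ∑ kl ∈ Finset.HasAntidiagonal.antidiagonal n, g kl := by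
    conv => congr; ext; rw [← Finset.sum_finset_coe, ← tsum_fintype (L := .unconditional _)]
    exact hgs.sigma' fun n => (hasSum_fintype _).summable
  have hts2 : ∑' n : ℕ, ∑ kl ∈ Finset.HasAntidiagonal.antidiagonal n, g kl = ∑' p : ℕ × ℕ, g p := by
    conv_lhs => congr; ext; rw [← Finset.sum_finset_coe, ← tsum_fintype (L := .unconditional _)]
    rw [← Finset.HasAntidiagonal.sigmaAntidiagonalEquivProd.tsum_eq (g : ℕ × ℕ → ℝ)]
    exact (Summable.tsum_sigma' (fun n => (hasSum_fintype _).summable) hgs).symm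
  have hterm : ∀ n : ℕ, ∑ kl ∈ Finset.HasAntidiagonal.antidiagonal n, g kl = r ^ n * laguerre n x := by
    intro n
    rw [Finset.Nat.sum_antidiagonal_eq_sum_range_succ_mk, laguerre, Finset.mul_sum]
    refine Finset.sum_congr rfl fun k hk => ?_
    rw [Finset.mem_range] at hk
    have hkn : k + (n - k) = n := by omega
    simp only [hg_def, hkn]
    ring
  have hS : Summable (fun n : ℕ => r ^ n * laguerre n x) := hdiag.congr hterm
  rw [hS.hasSum_iff]
  rw [tsum_congr (fun n => (hterm n).symm), hts2, hts]

end aux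

theorem stmt7 (ν t : ℝ) (hν : 0 < ν) (ht : 0 < t) (z w : ℂ) :
    Summable (fun k : ℕ => Real.exp (-ν * t * k) * laguerre k (ν * ‖z - w‖ ^ 2)) ∧
    ((Real.pi / ν : ℝ) : ℂ) * Complex.exp ((ν : ℂ) * z * (starRingEnd ℂ w)) *
        ((∑' k : ℕ, Real.exp (-ν * t * k) * laguerre k (ν * ‖z - w‖ ^ 2) : ℝ) : ℂ) =
      ((Real.pi : ℝ) : ℂ) * Complex.exp ((ν : ℂ) * z * (starRingEnd ℂ w)) /
          (((ν * (1 - Real.exp (-ν * t)) : ℝ)) : ℂ) *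
        Complex.exp (-(((ν * ‖z - w‖ ^ 2 * Real.exp (-ν * t) / (1 - Real.exp (-ν * t))) : ℝ) : ℂ)) := by
  set r : ℝ := Real.exp (-ν * t) with hr_def
  set x : ℝ := ν * ‖z - w‖ ^ 2 with hx_def
  have hr0 : 0 < r := Real.exp_pos _
  have hr1 : r < 1 := by
    rw [hr_def]
    apply Real.exp_lt_one_iff.mpr
    nlinarith
  have h1r : (0:ℝ) < 1 - r := by linarith
  have hpow : ∀ k : ℕ, Real.exp (-ν * t * k) = r ^ k := by
    intro k
    rw [hr_def, ← Real.exp_nat_mul]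
    ring_nf
  have H := laguerre_genfun hr0 hr1 x
  refine ⟨H.summable.congr fun k => by rw [hpow], ?_⟩
  have hts : (∑' k : ℕ, Real.exp (-ν * t * k) * laguerre k x)
      = (1 - r)⁻¹ * Real.exp (-x * r / (1 - r)) := by
    rw [← H.tsum_eq]
    exact tsum_congr fun k => by rw [hpow]
  rw [hts]
  have h1 : ((1:ℂ) - (r:ℂ)) ≠ 0 := by
    intro h
    have : (1:ℝ) - r = 0 := by exact_mod_cast h
    linarith
  have hν' : ((ν:ℝ):ℂ) ≠ 0 := by exact_mod_cast ne_of_gt hν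
  simp only [Complex.ofReal_mul, Complex.ofReal_inv, Complex.ofReal_div, Complex.ofReal_exp,
    Complex.ofReal_neg, Complex.ofReal_sub, Complex.ofReal_one, neg_mul, neg_div]
  field_simp
end

section
/- For every x ∈ ℝ and every s ∈ ℂ, the series ∑_{k=0}^∞ H_{k+1}(x) s^k / (k! (k+1)^{3/2}) converges absolutely, the integral on the right-hand side below converges, and ∑_{k=0}^∞ H_{k+1}(x) s^k / (k! (k+1)^{3/2}) = (2/√π) ∫_0^∞ √t e^{−t} exp(2 x s e^{−t} − s² e^{−2t}) · 2(x − s e^{−t}) dt. -/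
open MeasureTheory

/-- The physicists' Hermite polynomials, evaluated at complex arguments:
`H_0 = 1`, `H_1(x) = 2x`, `H_{n+1}(x) = 2x H_n(x) − 2n H_{n−1}(x)`. -/
noncomputable def hermiteC : ℕ → ℂ → ℂ
  | 0, _ => 1
  | 1, x => 2 * x
  | (n + 2), x => 2 * x * hermiteC (n + 1) x - 2 * ((n : ℂ) + 1) * hermiteC n x

open Finset

noncomputable def eaux (j : ℕ) : ℂ :=
  if Even j then ((-1 : ℂ)) ^ (j / 2) / ((j / 2).factorial : ℂ) else 0

noncomputable def faux (x : ℂ) (i : ℕ) : ℂ := (2 * x) ^ i / (i.factorial : ℂ)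

noncomputable def Aaux (x : ℂ) (n : ℕ) : ℂ :=
  ∑ k ∈ Finset.range (n + 1), faux x k * eaux (n - k)

lemma eaux_two_mul (m : ℕ) : eaux (2 * m) = ((-1 : ℂ)) ^ m / (m.factorial : ℂ) := by
  simp [eaux, Nat.even_iff, Nat.mul_div_cancel_left, Nat.mul_mod_right]

lemma eaux_odd {j : ℕ} (h : ¬ Even j) : eaux j = 0 := by simp [eaux, h]

lemma eaux_one : eaux 1 = 0 := eaux_odd (by decide)

lemma key_e (j : ℕ) : ((j : ℂ) + 2) * eaux (j + 2) = -2 * eaux j := by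
  rcases Nat.even_or_odd j with he | ho
  · obtain ⟨m, rfl⟩ := he
    have h1 : m + m = 2 * m := by ring
    have h2 : 2 * m + 2 = 2 * (m + 1) := by ring
    rw [h1, h2, eaux_two_mul, eaux_two_mul]
    have hm : ((m.factorial : ℂ)) ≠ 0 := Nat.cast_ne_zero.mpr m.factorial_ne_zero
    have hm1 : ((m : ℂ) + 1) ≠ 0 := Nat.cast_add_one_ne_zero m
    rw [Nat.factorial_succ]
    push_cast
    field_simp [hm, hm1]
    ring
  · rw [eaux_odd (Nat.not_even_iff_odd.mpr (ho.add_even even_two)),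
      eaux_odd (Nat.not_even_iff_odd.mpr ho)]
    ring

lemma faux_succ (x : ℂ) (i : ℕ) : ((i : ℂ) + 1) * faux x (i + 1) = 2 * x * faux x i := by
  have hi : ((i.factorial : ℂ)) ≠ 0 := Nat.cast_ne_zero.mpr i.factorial_ne_zero
  have hi1 : ((i : ℂ) + 1) ≠ 0 := Nat.cast_add_one_ne_zero i
  rw [faux, faux, Nat.factorial_succ, pow_succ]
  push_cast
  field_simp

lemma Aaux_rec (x : ℂ) (n : ℕ) :
    ((n : ℂ) + 2) * Aaux x (n + 2) = 2 * x * Aaux x (n + 1) - 2 * Aaux x n := by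
  have hsplit : ((n : ℂ) + 2) * Aaux x (n + 2) =
      (∑ i ∈ range (n + 3), (i : ℂ) * (faux x i * eaux (n + 2 - i)))
      + ∑ i ∈ range (n + 3), faux x i * (((n + 2 - i : ℕ) : ℂ) * eaux (n + 2 - i)) := by
    rw [Aaux, Finset.mul_sum, ← Finset.sum_add_distrib]
    refine Finset.sum_congr rfl fun i hi => ?_
    have hle : i ≤ n + 2 := Nat.lt_succ_iff.mp (Finset.mem_range.mp hi)
    have hcast : ((n + 2 - i : ℕ) : ℂ) = ((n : ℂ) + 2) - (i : ℂ) := by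
      rw [Nat.cast_sub hle]; push_cast; ring
    rw [hcast]; ring
  have hS1 : (∑ i ∈ range (n + 3), (i : ℂ) * (faux x i * eaux (n + 2 - i)))
      = 2 * x * Aaux x (n + 1) := by
    rw [Finset.sum_range_succ']
    simp only [Nat.cast_zero, zero_mul, add_zero]
    rw [Aaux, Finset.mul_sum]
    refine Finset.sum_congr rfl fun i hi => ?_
    have h1 : (n + 2) - (i + 1) = n + 1 - i := by omega
    rw [h1]
    push_cast
    calc ((i : ℂ) + 1) * (faux x (i + 1) * eaux (n + 1 - i))
        = (((i : ℂ) + 1) * faux x (i + 1)) * eaux (n + 1 - i) := by ring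
      _ = (2 * x * faux x i) * eaux (n + 1 - i) := by rw [faux_succ]
      _ = 2 * x * (faux x i * eaux (n + 1 - i)) := by ring
  have hS2 : (∑ i ∈ range (n + 3), faux x i * (((n + 2 - i : ℕ) : ℂ) * eaux (n + 2 - i)))
      = -2 * Aaux x n := by
    have hrefl : (∑ i ∈ range (n + 3), faux x i * (((n + 2 - i : ℕ) : ℂ) * eaux (n + 2 - i)))
        = ∑ j ∈ range (n + 3), faux x (n + 2 - j) * ((j : ℂ) * eaux j) := by
      rw [← Finset.sum_range_reflect (fun j => faux x (n + 2 - j) * ((j : ℂ) * eaux j)) (n + 3)]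
      refine Finset.sum_congr rfl fun i hi => ?_
      have hle : i ≤ n + 2 := Nat.lt_succ_iff.mp (Finset.mem_range.mp hi)
      have h1 : n + 3 - 1 - i = n + 2 - i := by omega
      have h2 : n + 2 - (n + 2 - i) = i := by omega
      rw [h1, h2]
    rw [hrefl, Finset.sum_range_succ']
    have hF0 : faux x (n + 2 - 0) * ((0 : ℕ) : ℂ) * eaux 0 = 0 := by simp
    simp only [Nat.cast_zero, zero_mul, mul_zero, add_zero]
    rw [Finset.sum_range_succ']
    have hF1 : faux x (n + 2 - (0 + 1)) * (((0 + 1 : ℕ)) : ℂ) * eaux (0 + 1) = 0 := by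
      simp [eaux_one]
    simp only [zero_add, eaux_one, mul_zero, add_zero]
    have hstep : (∑ i ∈ range (n + 1),
        faux x (n + 2 - (i + 1 + 1)) * ((((i + 1 + 1 : ℕ)) : ℂ) * eaux (i + 1 + 1)))
        = -2 * ∑ i ∈ range (n + 1), faux x (n - i) * eaux i := by
      rw [Finset.mul_sum]
      refine Finset.sum_congr rfl fun i hi => ?_
      have h1 : n + 2 - (i + 1 + 1) = n - i := by omega
      have h2 : i + 1 + 1 = i + 2 := by omega
      rw [h1, h2]
      push_cast
      calc faux x (n - i) * (((i : ℂ) + 2) * eaux (i + 2))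
          = faux x (n - i) * (-2 * eaux i) := by rw [key_e]
        _ = -2 * (faux x (n - i) * eaux i) := by ring
    have hback : (∑ i ∈ range (n + 1), faux x (n - i) * eaux i) = Aaux x n := by
      rw [Aaux, ← Finset.sum_range_reflect (fun k => faux x k * eaux (n - k)) (n + 1)]
      refine Finset.sum_congr rfl fun i hi => ?_
      have hle : i ≤ n := Nat.lt_succ_iff.mp (Finset.mem_range.mp hi)
      have h1 : n + 1 - 1 - i = n - i := by omega
      have h2 : n - (n - i) = i := by omega
      rw [h1, h2]
    rw [hstep, hback]
  rw [hsplit, hS1, hS2]; ring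

lemma Aaux_zero (x : ℂ) : Aaux x 0 = 1 := by
  simp [Aaux, faux, eaux]

lemma Aaux_one (x : ℂ) : Aaux x 1 = 2 * x := by
  simp [Aaux, Finset.sum_range_succ, faux, eaux_one, eaux]

lemma herm_eq (x : ℂ) : ∀ n, hermiteC n x = (n.factorial : ℂ) * Aaux x n
  | 0 => by simp [hermiteC, Aaux_zero]
  | 1 => by simp [hermiteC, Aaux_one]
  | (n + 2) => by
    have h1 := herm_eq x (n + 1)
    have h2 := herm_eq x n
    have hr := Aaux_rec x n
    rw [hermiteC, h1, h2]
    push_cast [Nat.factorial_succ]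
    linear_combination (-(((n : ℂ) + 1) * (n.factorial : ℂ))) * hr

lemma hasSum_exp_part (u : ℂ) :
    HasSum (fun m : ℕ => (-u ^ 2) ^ m / (m.factorial : ℂ)) (Complex.exp (-u ^ 2)) := by
  rw [Complex.exp_eq_exp_ℂ]
  exact NormedSpace.expSeries_div_hasSum_exp (-u ^ 2)

lemma hasSum_G (u : ℂ) : HasSum (fun j => eaux j * u ^ j) (Complex.exp (-u ^ 2)) := by
  have hinj : Function.Injective (fun m : ℕ => 2 * m) := fun a b h => by simp only at h; omega
  have h0 : ∀ j ∉ Set.range (fun m : ℕ => 2 * m), eaux j * u ^ j = 0 := by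
    intro j hj
    have hje : ¬ Even j := by rintro ⟨m, rfl⟩; exact hj ⟨m, by simp [two_mul]⟩
    rw [eaux_odd hje, zero_mul]
  refine (hinj.hasSum_iff h0).mp ?_
  have hfun : ((fun j => eaux j * u ^ j) ∘ fun m : ℕ => 2 * m)
      = fun m : ℕ => (-u ^ 2) ^ m / (m.factorial : ℂ) := by
    funext m
    simp only [Function.comp_apply]
    rw [eaux_two_mul, neg_pow, pow_mul]
    ring
  rw [hfun]
  exact hasSum_exp_part u

lemma summable_norm_G (u : ℂ) : Summable fun j => ‖eaux j * u ^ j‖ := by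
  have hinj : Function.Injective (fun m : ℕ => 2 * m) := fun a b h => by simp only at h; omega
  have h0 : ∀ j ∉ Set.range (fun m : ℕ => 2 * m), ‖eaux j * u ^ j‖ = 0 := by
    intro j hj
    have hje : ¬ Even j := by rintro ⟨m, rfl⟩; exact hj ⟨m, by simp [two_mul]⟩
    rw [eaux_odd hje, zero_mul, norm_zero]
  refine (hinj.summable_iff h0).mp ?_
  have hfun : ((fun j => ‖eaux j * u ^ j‖) ∘ fun m : ℕ => 2 * m)
      = fun m : ℕ => (‖u‖ ^ 2) ^ m / (m.factorial : ℝ) := by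
    funext m
    simp only [Function.comp_apply]
    rw [eaux_two_mul, pow_mul, norm_mul, norm_div, norm_pow, norm_pow, norm_neg, norm_one]
    simp [Complex.norm_natCast]
    ring
  rw [hfun]
  exact Real.summable_pow_div_factorial _

lemma hasSum_F (x u : ℂ) : HasSum (fun i => faux x i * u ^ i) (Complex.exp (2 * x * u)) := by
  have h := NormedSpace.expSeries_div_hasSum_exp (2 * x * u)
  rw [Complex.exp_eq_exp_ℂ]
  have hfun : (fun i : ℕ => faux x i * u ^ i)
      = fun i : ℕ => (2 * x * u) ^ i / (i.factorial : ℂ) := by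
    funext i; rw [faux, mul_pow]; ring
  rw [hfun]
  exact h

lemma summable_norm_F (x u : ℂ) : Summable fun i => ‖faux x i * u ^ i‖ := by
  have hfun : (fun i : ℕ => ‖faux x i * u ^ i‖)
      = fun i : ℕ => ‖2 * x * u‖ ^ i / (i.factorial : ℝ) := by
    funext i
    have h2 : ‖2 * x * u‖ ^ i = ‖2 * x‖ ^ i * ‖u‖ ^ i := by rw [norm_mul, mul_pow]
    rw [h2, faux, norm_mul, norm_div, norm_pow, norm_pow]
    simp only [Complex.norm_natCast]
    ring
  rw [hfun]
  exact Real.summable_pow_div_factorial _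

lemma C_eq (x u : ℂ) (n : ℕ) :
    (∑ kl ∈ Finset.HasAntidiagonal.antidiagonal n, (faux x kl.1 * u ^ kl.1) * (eaux kl.2 * u ^ kl.2))
      = Aaux x n * u ^ n := by
  rw [Finset.Nat.sum_antidiagonal_eq_sum_range_succ_mk, Aaux, Finset.sum_mul]
  refine Finset.sum_congr rfl fun k hk => ?_
  have hle : k ≤ n := Nat.lt_succ_iff.mp (Finset.mem_range.mp hk)
  have hpow : u ^ k * u ^ (n - k) = u ^ n := by rw [← pow_add]; congr 1; omega
  calc (faux x k * u ^ k) * (eaux (n - k) * u ^ (n - k))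
      = faux x k * eaux (n - k) * (u ^ k * u ^ (n - k)) := by ring
    _ = faux x k * eaux (n - k) * u ^ n := by rw [hpow]

lemma hasSum_Au (x u : ℂ) :
    HasSum (fun n => Aaux x n * u ^ n) (Complex.exp (2 * x * u - u ^ 2)) := by
  have hF := summable_norm_F x u
  have hG := summable_norm_G u
  have h2 : Summable fun n =>
      ∑ kl ∈ Finset.HasAntidiagonal.antidiagonal n, (faux x kl.1 * u ^ kl.1) * (eaux kl.2 * u ^ kl.2) :=
    (summable_norm_sum_mul_antidiagonal_of_summable_norm hF hG).of_norm
  have hsum : Summable fun n => Aaux x n * u ^ n := by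
    have := h2; simp_rw [C_eq x u] at this; exact this
  refine (Summable.hasSum_iff hsum).mpr ?_
  have hts := tsum_mul_tsum_eq_tsum_sum_antidiagonal_of_summable_norm hF hG
  rw [(hasSum_F x u).tsum_eq, (hasSum_G u).tsum_eq] at hts
  have hexp : Complex.exp (2 * x * u) * Complex.exp (-u ^ 2)
      = Complex.exp (2 * x * u - u ^ 2) := by
    rw [← Complex.exp_add]; ring_nf
  rw [← tsum_congr (C_eq x u), ← hts, hexp]

lemma summable_norm_Au (x u : ℂ) : Summable fun n => ‖Aaux x n * u ^ n‖ := by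
  have h := summable_norm_sum_mul_antidiagonal_of_summable_norm
    (summable_norm_F x u) (summable_norm_G u)
  simp_rw [C_eq x u] at h
  exact h

lemma herm_term (x u : ℂ) (n : ℕ) :
    hermiteC n x * u ^ n / (n.factorial : ℂ) = Aaux x n * u ^ n := by
  have hn : ((n.factorial : ℂ)) ≠ 0 := Nat.cast_ne_zero.mpr n.factorial_ne_zero
  rw [herm_eq]
  field_simp

lemma hasSum_H (x u : ℂ) :
    HasSum (fun n => hermiteC n x * u ^ n / (n.factorial : ℂ))
      (Complex.exp (2 * x * u - u ^ 2)) := by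
  have h := hasSum_Au x u
  simp_rw [← herm_term] at h
  exact h

lemma summable_norm_H (x u : ℂ) :
    Summable fun n => ‖hermiteC n x * u ^ n / (n.factorial : ℂ)‖ := by
  have h := summable_norm_Au x u
  simp_rw [← herm_term] at h
  exact h

noncomputable def psiaux (x u : ℂ) (k : ℕ) : ℂ :=
  if k = 0 then 0 else hermiteC (k - 1) x * u ^ k / ((k - 1).factorial : ℂ)

lemma psiaux_succ (x u : ℂ) (k : ℕ) :
    psiaux x u (k + 1) = u * (hermiteC k x * u ^ k / (k.factorial : ℂ)) := by
  rw [psiaux, if_neg (Nat.succ_ne_zero k)]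
  simp only [Nat.add_sub_cancel]
  rw [pow_succ]
  ring

lemma herm_shift_term (x u : ℂ) (k : ℕ) :
    hermiteC (k + 1) x * u ^ k / (k.factorial : ℂ)
      = 2 * x * (hermiteC k x * u ^ k / (k.factorial : ℂ)) - 2 * psiaux x u k := by
  cases k with
  | zero => simp [psiaux, hermiteC]
  | succ k =>
    rw [psiaux, if_neg (Nat.succ_ne_zero k)]
    simp only [Nat.add_sub_cancel]
    have hk : ((k.factorial : ℂ)) ≠ 0 := Nat.cast_ne_zero.mpr k.factorial_ne_zero
    have hk1 : ((k : ℂ) + 1) ≠ 0 := Nat.cast_add_one_ne_zero k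
    have hrec : hermiteC (k + 1 + 1) x
        = 2 * x * hermiteC (k + 1) x - 2 * ((k : ℂ) + 1) * hermiteC k x := rfl
    rw [hrec, Nat.factorial_succ]
    push_cast
    field_simp

lemma hasSum_psiaux (x u : ℂ) :
    HasSum (psiaux x u) (u * Complex.exp (2 * x * u - u ^ 2)) := by
  have h1 := (hasSum_H x u).mul_left u
  have h3 : HasSum (fun n => psiaux x u (n + 1)) (u * Complex.exp (2 * x * u - u ^ 2)) := by
    simp_rw [psiaux_succ]; exact h1
  have h4 := (hasSum_nat_add_iff 1).mp h3
  simpa [psiaux] using h4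

lemma hasSum_shift (x u : ℂ) :
    HasSum (fun k => hermiteC (k + 1) x * u ^ k / (k.factorial : ℂ))
      (Complex.exp (2 * x * u - u ^ 2) * (2 * (x - u))) := by
  have h := ((hasSum_H x u).mul_left (2 * x)).sub ((hasSum_psiaux x u).mul_left 2)
  simp_rw [← herm_shift_term] at h
  convert h using 1
  · rfl
  ring

lemma summable_norm_psiaux (x u : ℂ) : Summable fun k => ‖psiaux x u k‖ := by
  refine (summable_nat_add_iff 1).mp ?_
  have h : (fun n : ℕ => ‖psiaux x u (n + 1)‖)
      = fun n : ℕ => ‖u‖ * ‖hermiteC n x * u ^ n / (n.factorial : ℂ)‖ := by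
    funext n; rw [psiaux_succ, norm_mul]
  rw [h]
  exact (summable_norm_H x u).mul_left _

lemma summable_norm_shift (x u : ℂ) :
    Summable fun k => ‖hermiteC (k + 1) x * u ^ k / (k.factorial : ℂ)‖ := by
  refine Summable.of_nonneg_of_le (fun k => norm_nonneg _) (fun k => ?_)
    (((summable_norm_H x u).mul_left ‖2 * x‖).add ((summable_norm_psiaux x u).mul_left 2))
  rw [herm_shift_term]
  refine (norm_sub_le _ _).trans ?_
  rw [norm_mul, norm_mul]
  simp [Complex.norm_ofNat]

lemma sqrt_exp_integrableOn {b : ℝ} (hb : 1 ≤ b) :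
    IntegrableOn (fun t : ℝ => Real.sqrt t * Real.exp (-(b * t))) (Set.Ioi 0) := by
  have hbase := Real.GammaIntegral_convergent (s := 3/2) (by norm_num)
  refine hbase.mono' ?_ ?_
  · refine (Continuous.aestronglyMeasurable ?_).restrict
    exact Real.continuous_sqrt.mul (Real.continuous_exp.comp (continuous_const.mul continuous_id).neg)
  · rw [MeasureTheory.ae_restrict_iff' measurableSet_Ioi]
    refine Filter.Eventually.of_forall fun t ht => ?_
    simp only [Set.mem_Ioi] at ht
    rw [Real.norm_eq_abs, abs_mul, abs_of_nonneg (Real.sqrt_nonneg t),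
      abs_of_nonneg (Real.exp_nonneg _)]
    have h1 : Real.exp (-(b * t)) ≤ Real.exp (-t) := by
      apply Real.exp_le_exp.mpr; nlinarith
    have h2 : Real.sqrt t = t ^ ((3:ℝ)/2 - 1) := by
      rw [Real.sqrt_eq_rpow]; norm_num
    calc Real.sqrt t * Real.exp (-(b * t)) ≤ Real.sqrt t * Real.exp (-t) :=
          mul_le_mul_of_nonneg_left h1 (Real.sqrt_nonneg t)
      _ = Real.exp (-t) * t ^ ((3:ℝ)/2 - 1) := by rw [h2]; ring

lemma Gamma_three_half : Real.Gamma (3/2) = Real.sqrt Real.pi / 2 := by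
  rw [show (3:ℝ)/2 = 1/2 + 1 by norm_num, Real.Gamma_add_one (by norm_num),
    Real.Gamma_one_half_eq]
  ring

lemma sqrt_exp_integral {b : ℝ} (hb : 0 < b) :
    ∫ t in Set.Ioi 0, Real.sqrt t * Real.exp (-(b * t))
      = (1 / b) ^ ((3:ℝ)/2) * (Real.sqrt Real.pi / 2) := by
  rw [← Gamma_three_half, ← Real.integral_rpow_mul_exp_neg_mul_Ioi (by norm_num : (0:ℝ) < 3/2) hb]
  refine setIntegral_congr_fun measurableSet_Ioi fun t ht => ?_
  simp only [Set.mem_Ioi] at ht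
  rw [Real.sqrt_eq_rpow]
  norm_num

lemma integral_ofReal'' {f : ℝ → ℝ} {μ : Measure ℝ} :
    (∫ t, ((f t : ℝ) : ℂ) ∂μ) = (((∫ t, f t ∂μ : ℝ)) : ℂ) := integral_ofReal

lemma ptwise (x : ℝ) (s : ℂ) (t : ℝ) :
    HasSum (fun k : ℕ => (hermiteC (k + 1) (x : ℂ) * s ^ k / (k.factorial : ℂ)) *
        ((Real.sqrt t * Real.exp (-(((k : ℝ) + 1) * t)) : ℝ) : ℂ))
      (((Real.sqrt t * Real.exp (-t) : ℝ) : ℂ) *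
        (Complex.exp (2 * (x : ℂ) * s * ((Real.exp (-t) : ℝ) : ℂ)
            - s ^ 2 * ((Real.exp (-2 * t) : ℝ) : ℂ)) *
          (2 * ((x : ℂ) - s * ((Real.exp (-t) : ℝ) : ℂ))))) := by
  have h := (hasSum_shift (x : ℂ) (s * ((Real.exp (-t) : ℝ) : ℂ))).mul_left
    ((Real.sqrt t * Real.exp (-t) : ℝ) : ℂ)
  have hfun : ∀ k : ℕ, ((Real.sqrt t * Real.exp (-t) : ℝ) : ℂ) *
      (hermiteC (k + 1) (x : ℂ) * (s * ((Real.exp (-t) : ℝ) : ℂ)) ^ k / (k.factorial : ℂ))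
      = (hermiteC (k + 1) (x : ℂ) * s ^ k / (k.factorial : ℂ)) *
        ((Real.sqrt t * Real.exp (-(((k : ℝ) + 1) * t)) : ℝ) : ℂ) := by
    intro k
    have hk : Real.exp (-t) ^ k = Real.exp (-((k : ℝ) * t)) := by
      rw [← Real.exp_nat_mul]; ring_nf
    rw [mul_pow, ← Complex.ofReal_pow, hk]
    push_cast
    have hmc2 : Complex.exp (-(((k : ℂ) + 1) * (t : ℂ)))
        = Complex.exp (-(t : ℂ)) * Complex.exp (-((k : ℂ) * (t : ℂ))) := by
      rw [← Complex.exp_add]; congr 1; ring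
    rw [hmc2]
    ring
  have hval : Complex.exp (2 * (x : ℂ) * (s * ((Real.exp (-t) : ℝ) : ℂ))
        - (s * ((Real.exp (-t) : ℝ) : ℂ)) ^ 2)
      = Complex.exp (2 * (x : ℂ) * s * ((Real.exp (-t) : ℝ) : ℂ)
        - s ^ 2 * ((Real.exp (-2 * t) : ℝ) : ℂ)) := by
    have h2 : ((Real.exp (-2 * t) : ℝ) : ℂ) = ((Real.exp (-t) : ℝ) : ℂ) ^ 2 := by
      rw [← Complex.ofReal_pow, ← Real.exp_nat_mul]; norm_num
    rw [h2]
    congr 1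
    ring
  simp_rw [hfun, hval] at h
  convert h using 2

theorem stmt8 (x : ℝ) (s : ℂ) :
    Summable (fun k : ℕ =>
      ‖hermiteC (k + 1) (x : ℂ) * s ^ k /
        ((k.factorial : ℂ) * (((((k : ℝ) + 1) ^ ((3 : ℝ) / 2) : ℝ)) : ℂ))‖) ∧
    IntegrableOn (fun t : ℝ =>
      ((Real.sqrt t * Real.exp (-t) : ℝ) : ℂ) *
        (Complex.exp (2 * (x : ℂ) * s * ((Real.exp (-t) : ℝ) : ℂ)
            - s ^ 2 * ((Real.exp (-2 * t) : ℝ) : ℂ)) *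
          (2 * ((x : ℂ) - s * ((Real.exp (-t) : ℝ) : ℂ))))) (Set.Ioi 0) ∧
    (∑' k : ℕ, hermiteC (k + 1) (x : ℂ) * s ^ k /
        ((k.factorial : ℂ) * (((((k : ℝ) + 1) ^ ((3 : ℝ) / 2) : ℝ)) : ℂ))) =
      ((2 / Real.sqrt Real.pi : ℝ) : ℂ) *
        ∫ t in Set.Ioi (0 : ℝ),
          ((Real.sqrt t * Real.exp (-t) : ℝ) : ℂ) *
            (Complex.exp (2 * (x : ℂ) * s * ((Real.exp (-t) : ℝ) : ℂ)
                - s ^ 2 * ((Real.exp (-2 * t) : ℝ) : ℂ)) *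
              (2 * ((x : ℂ) - s * ((Real.exp (-t) : ℝ) : ℂ)))) := by
  have hcs : Summable fun k => ‖hermiteC (k + 1) (x : ℂ) * s ^ k / (k.factorial : ℂ)‖ :=
    summable_norm_shift (x : ℂ) s
  have hw : ∀ k : ℕ, (1 : ℝ) ≤ ((k : ℝ) + 1) ^ ((3 : ℝ) / 2) := by
    intro k
    calc (1 : ℝ) = (1 : ℝ) ^ ((3 : ℝ) / 2) := (Real.one_rpow _).symm
      _ ≤ ((k : ℝ) + 1) ^ ((3 : ℝ) / 2) :=
        Real.rpow_le_rpow (by norm_num) (by linarith [Nat.cast_nonneg (α := ℝ) k]) (by norm_num)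
  -- Part 1
  have part1 : Summable (fun k : ℕ =>
      ‖hermiteC (k + 1) (x : ℂ) * s ^ k /
        ((k.factorial : ℂ) * (((((k : ℝ) + 1) ^ ((3 : ℝ) / 2) : ℝ)) : ℂ))‖) := by
    refine Summable.of_nonneg_of_le (fun k => norm_nonneg _) (fun k => ?_) hcs
    rw [← div_div, norm_div, Complex.norm_real, Real.norm_eq_abs,
      abs_of_pos (lt_of_lt_of_le one_pos (hw k))]
    exact div_le_self (norm_nonneg _) (hw k)
  -- continuity / measurability of the integrand
  have hcont : Continuous (fun t : ℝ =>
      ((Real.sqrt t * Real.exp (-t) : ℝ) : ℂ) *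
        (Complex.exp (2 * (x : ℂ) * s * ((Real.exp (-t) : ℝ) : ℂ)
            - s ^ 2 * ((Real.exp (-2 * t) : ℝ) : ℂ)) *
          (2 * ((x : ℂ) - s * ((Real.exp (-t) : ℝ) : ℂ))))) := by
    fun_prop
  -- Part 2
  have part2 : IntegrableOn (fun t : ℝ =>
      ((Real.sqrt t * Real.exp (-t) : ℝ) : ℂ) *
        (Complex.exp (2 * (x : ℂ) * s * ((Real.exp (-t) : ℝ) : ℂ)
            - s ^ 2 * ((Real.exp (-2 * t) : ℝ) : ℂ)) *
          (2 * ((x : ℂ) - s * ((Real.exp (-t) : ℝ) : ℂ))))) (Set.Ioi 0) := by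
    have h1 : IntegrableOn (fun t : ℝ => Real.sqrt t * Real.exp (-(1 * t))) (Set.Ioi 0) :=
      sqrt_exp_integrableOn le_rfl
    simp only [one_mul] at h1
    set M : ℝ := Real.exp (2 * |x| * ‖s‖ + ‖s‖ ^ 2) * (2 * (|x| + ‖s‖)) with hM
    refine Integrable.mono' (h1.const_mul M) (hcont.aestronglyMeasurable.restrict) ?_
    rw [MeasureTheory.ae_restrict_iff' measurableSet_Ioi]
    refine Filter.Eventually.of_forall fun t ht => ?_
    simp only [Set.mem_Ioi] at ht
    have het : Real.exp (-t) ≤ 1 := Real.exp_le_one_iff.mpr (by linarith)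
    have he2t : Real.exp (-2 * t) ≤ 1 := Real.exp_le_one_iff.mpr (by linarith)
    have hetpos := Real.exp_pos (-t)
    have he2tpos := Real.exp_pos (-2 * t)
    rw [norm_mul, norm_mul, Complex.norm_real, Real.norm_eq_abs,
      abs_of_nonneg (mul_nonneg (Real.sqrt_nonneg t) hetpos.le)]
    have hE : ‖Complex.exp (2 * (x : ℂ) * s * ((Real.exp (-t) : ℝ) : ℂ)
        - s ^ 2 * ((Real.exp (-2 * t) : ℝ) : ℂ))‖ ≤ Real.exp (2 * |x| * ‖s‖ + ‖s‖ ^ 2) := by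
      rw [Complex.norm_exp]
      apply Real.exp_le_exp.mpr
      refine le_trans (Complex.re_le_norm _) ?_
      refine le_trans (norm_sub_le _ _) ?_
      have hn1 : ‖2 * (x : ℂ) * s * ((Real.exp (-t) : ℝ) : ℂ)‖ ≤ 2 * |x| * ‖s‖ := by
        simp only [norm_mul, Complex.norm_real, Real.norm_eq_abs, Complex.norm_ofNat]
        rw [abs_of_pos hetpos]
        nlinarith [mul_le_mul_of_nonneg_left het (by positivity : (0:ℝ) ≤ 2 * |x| * ‖s‖)]
      have hn2 : ‖s ^ 2 * ((Real.exp (-2 * t) : ℝ) : ℂ)‖ ≤ ‖s‖ ^ 2 := by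
        simp only [norm_mul, norm_pow, Complex.norm_real, Real.norm_eq_abs]
        rw [abs_of_pos he2tpos]
        nlinarith [mul_le_mul_of_nonneg_left he2t (by positivity : (0:ℝ) ≤ ‖s‖ ^ 2)]
      linarith
    have hB : ‖2 * ((x : ℂ) - s * ((Real.exp (-t) : ℝ) : ℂ))‖ ≤ 2 * (|x| + ‖s‖) := by
      rw [norm_mul]
      have h2 : ‖(2 : ℂ)‖ = 2 := by norm_num
      rw [h2]
      refine mul_le_mul_of_nonneg_left ?_ (by norm_num)
      refine le_trans (norm_sub_le _ _) ?_
      simp only [norm_mul, Complex.norm_real, Real.norm_eq_abs]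
      rw [abs_of_pos hetpos]
      nlinarith [mul_le_mul_of_nonneg_left het (norm_nonneg s)]
    have ha : 0 ≤ Real.sqrt t * Real.exp (-t) := mul_nonneg (Real.sqrt_nonneg t) hetpos.le
    have hEB := mul_le_mul hE hB (norm_nonneg _) (Real.exp_nonneg _)
    have h5 := mul_le_mul_of_nonneg_left hEB ha
    rw [hM]
    have heq : Real.sqrt t * Real.exp (-t) *
        (Real.exp (2 * |x| * ‖s‖ + ‖s‖ ^ 2) * (2 * (|x| + ‖s‖)))
        = Real.exp (2 * |x| * ‖s‖ + ‖s‖ ^ 2) * (2 * (|x| + ‖s‖)) *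
          (Real.sqrt t * Real.exp (-t)) := by ring
    linarith [h5, heq]
  refine ⟨part1, part2, ?_⟩
  have hr : ∀ k : ℕ, (0:ℝ) < (k:ℝ) + 1 := fun k => by positivity
  have hGint : ∀ k : ℕ, Integrable (fun t : ℝ =>
      (hermiteC (k + 1) (x : ℂ) * s ^ k / (k.factorial : ℂ)) *
        ((Real.sqrt t * Real.exp (-(((k : ℝ) + 1) * t)) : ℝ) : ℂ))
      (volume.restrict (Set.Ioi 0)) := by
    intro k
    exact ((sqrt_exp_integrableOn
      (by linarith [Nat.cast_nonneg (α := ℝ) k] : (1:ℝ) ≤ (k:ℝ) + 1)).ofReal).const_mul _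
  have Jval : ∀ k : ℕ, (∫ t in Set.Ioi 0, Real.sqrt t * Real.exp (-(((k : ℝ) + 1) * t)))
      = (1 / ((k : ℝ) + 1)) ^ ((3:ℝ)/2) * (Real.sqrt Real.pi / 2) :=
    fun k => sqrt_exp_integral (hr k)
  have hnormint : ∀ k : ℕ, (∫ t in Set.Ioi 0,
      ‖(hermiteC (k + 1) (x : ℂ) * s ^ k / (k.factorial : ℂ)) *
        ((Real.sqrt t * Real.exp (-(((k : ℝ) + 1) * t)) : ℝ) : ℂ)‖)
      = ‖hermiteC (k + 1) (x : ℂ) * s ^ k / (k.factorial : ℂ)‖ *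
        ((1 / ((k : ℝ) + 1)) ^ ((3:ℝ)/2) * (Real.sqrt Real.pi / 2)) := by
    intro k
    rw [← Jval k]
    simp_rw [norm_mul, Complex.norm_real, Real.norm_eq_abs]
    rw [MeasureTheory.integral_const_mul]
    congr 1
    refine setIntegral_congr_fun measurableSet_Ioi fun t ht => ?_
    rw [abs_of_nonneg (by positivity)]
  have hsumint : Summable (fun k : ℕ => ∫ t in Set.Ioi 0,
      ‖(hermiteC (k + 1) (x : ℂ) * s ^ k / (k.factorial : ℂ)) *
        ((Real.sqrt t * Real.exp (-(((k : ℝ) + 1) * t)) : ℝ) : ℂ)‖) := by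
    refine Summable.of_nonneg_of_le
      (fun k => integral_nonneg fun t => norm_nonneg _) (fun k => ?_)
      (hcs.mul_right (Real.sqrt Real.pi / 2))
    rw [hnormint k]
    have h1 : (1 / ((k : ℝ) + 1)) ^ ((3:ℝ)/2) ≤ 1 :=
      Real.rpow_le_one (by positivity)
        (by rw [div_le_one (hr k)]; linarith [Nat.cast_nonneg (α := ℝ) k]) (by norm_num)
    have h2 : (0:ℝ) ≤ (1 / ((k : ℝ) + 1)) ^ ((3:ℝ)/2) := Real.rpow_nonneg (by positivity) _
    have h3 := norm_nonneg (hermiteC (k + 1) (x : ℂ) * s ^ k / (k.factorial : ℂ))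
    have h4 : (0:ℝ) < Real.sqrt Real.pi / 2 := by
      have := Real.sqrt_pos.mpr Real.pi_pos; linarith
    have h5 := mul_le_mul_of_nonneg_left (mul_le_mul_of_nonneg_right h1 h4.le) h3
    simpa using h5
  have hswap := integral_tsum_of_summable_integral_norm hGint hsumint
  have hptw : (fun t : ℝ => ((Real.sqrt t * Real.exp (-t) : ℝ) : ℂ) *
      (Complex.exp (2 * (x : ℂ) * s * ((Real.exp (-t) : ℝ) : ℂ)
          - s ^ 2 * ((Real.exp (-2 * t) : ℝ) : ℂ)) *
        (2 * ((x : ℂ) - s * ((Real.exp (-t) : ℝ) : ℂ)))))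
      = fun t : ℝ => ∑' k : ℕ, (hermiteC (k + 1) (x : ℂ) * s ^ k / (k.factorial : ℂ)) *
        ((Real.sqrt t * Real.exp (-(((k : ℝ) + 1) * t)) : ℝ) : ℂ) :=
    funext fun t => ((ptwise x s t).tsum_eq).symm
  have hIk : ∀ k : ℕ, (∫ t in Set.Ioi 0,
      (hermiteC (k + 1) (x : ℂ) * s ^ k / (k.factorial : ℂ)) *
        ((Real.sqrt t * Real.exp (-(((k : ℝ) + 1) * t)) : ℝ) : ℂ))
      = (hermiteC (k + 1) (x : ℂ) * s ^ k / (k.factorial : ℂ)) *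
        ((((1 / ((k : ℝ) + 1)) ^ ((3:ℝ)/2) * (Real.sqrt Real.pi / 2) : ℝ)) : ℂ) := by
    intro k
    rw [MeasureTheory.integral_const_mul, integral_ofReal'', Jval k]
  rw [hptw, ← hswap]
  simp_rw [hIk]
  rw [← tsum_mul_left]
  refine tsum_congr fun k => ?_
  have hW : (0:ℝ) < ((k : ℝ) + 1) ^ ((3:ℝ)/2) := lt_of_lt_of_le one_pos (hw k)
  have hinv : (1 / ((k : ℝ) + 1)) ^ ((3:ℝ)/2) = (((k : ℝ) + 1) ^ ((3:ℝ)/2))⁻¹ := by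
    rw [one_div, Real.inv_rpow (hr k).le]
  rw [hinv]
  have hπ : Real.sqrt Real.pi ≠ 0 := ne_of_gt (Real.sqrt_pos.mpr Real.pi_pos)
  have hWne : (((k : ℝ) + 1) ^ ((3:ℝ)/2)) ≠ 0 := ne_of_gt hW
  have hmul : ((2 / Real.sqrt Real.pi : ℝ) : ℂ) *
      ((((((k : ℝ) + 1) ^ ((3:ℝ)/2))⁻¹ * (Real.sqrt Real.pi / 2) : ℝ)) : ℂ)
      = ((((((k : ℝ) + 1) ^ ((3:ℝ)/2))⁻¹ : ℝ)) : ℂ) := by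
    rw [← Complex.ofReal_mul]
    congr 1
    field_simp
  calc hermiteC (k + 1) (x : ℂ) * s ^ k /
        ((k.factorial : ℂ) * (((((k : ℝ) + 1) ^ ((3:ℝ)/2)) : ℝ) : ℂ))
      = (hermiteC (k + 1) (x : ℂ) * s ^ k / (k.factorial : ℂ)) *
        ((((((k : ℝ) + 1) ^ ((3:ℝ)/2))⁻¹ : ℝ)) : ℂ) := by
        rw [Complex.ofReal_inv, ← div_div, div_eq_mul_inv]
    _ = ((2 / Real.sqrt Real.pi : ℝ) : ℂ) *
        ((hermiteC (k + 1) (x : ℂ) * s ^ k / (k.factorial : ℂ)) *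
          ((((((k : ℝ) + 1) ^ ((3:ℝ)/2))⁻¹ * (Real.sqrt Real.pi / 2) : ℝ)) : ℂ)) := by
        rw [← hmul]; ring
end

section
/- Let m ≥ 2 be an integer. Then for every t ≥ 0, ϖ_m(t) ≤ (π/8)^{m−1} t^{(3m−2)/2} e^{−t}. (Here π/8 = B(3/2, 3/2) is the value of the Beta function at (3/2, 3/2).) -/
open MeasureTheory

/-- The convolution `(f * g)(x) = ∫_0^x f(x−y) g(y) dy` of functions on `[0,∞)`. -/
noncomputable def rconv (f g : ℝ → ℝ) (x : ℝ) : ℝ := ∫ y in (0 : ℝ)..x, f (x - y) * g y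

/-- The iterated convolution `ϖ_m = (√t e^{−t}) * (√t e^{−2t}) * ⋯ * (√t e^{−mt})`
(meaningful for `m ≥ 1`; the value at `0` is junk). -/
noncomputable def varpi : ℕ → ℝ → ℝ
  | 0 => fun _ => 0
  | 1 => fun t => Real.sqrt t * Real.exp (-t)
  | (m + 2) => rconv (varpi (m + 1)) (fun t => Real.sqrt t * Real.exp (-((m : ℝ) + 2) * t))

lemma key_integral (t : ℝ) (ht : 0 ≤ t) :
    ∫ y in (0:ℝ)..t, Real.sqrt (t - y) * Real.sqrt y = Real.pi / 8 * t ^ 2 := by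
  have h1 : ∫ y in (0:ℝ)..t, Real.sqrt (t - y) * Real.sqrt y
      = ∫ y in (0:ℝ)..t, Real.sqrt ((t/2)^2 - (y - t/2)^2) := by
    apply intervalIntegral.integral_congr
    intro y hy
    rw [Set.uIcc_of_le ht] at hy
    show Real.sqrt (t - y) * Real.sqrt y = Real.sqrt ((t/2)^2 - (y - t/2)^2)
    rw [← Real.sqrt_mul (by linarith [hy.2] : (0:ℝ) ≤ t - y)]
    congr 1; ring
  rw [h1, intervalIntegral.integral_comp_sub_right (fun u => Real.sqrt ((t/2)^2 - u^2)) (t/2)]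
  rcases eq_or_lt_of_le ht with h | h
  · simp [← h]
  · have hc : t / 2 ≠ 0 := by positivity
    have h2 : ∀ x : ℝ, Real.sqrt ((t/2)^2 - (t/2 * x)^2) = (t/2) * Real.sqrt (1 - x^2) := by
      intro x
      rw [← Real.sqrt_sq (by positivity : (0:ℝ) ≤ t/2), ← Real.sqrt_mul (by positivity)]
      rw [Real.sqrt_sq (by positivity : (0:ℝ) ≤ t/2)]
      congr 1; ring
    have h3 : (∫ x in (-1:ℝ)..1, Real.sqrt ((t/2)^2 - (t/2 * x)^2))
        = (t/2)⁻¹ • ∫ u in (t/2 * -1)..(t/2 * 1), Real.sqrt ((t/2)^2 - u^2) :=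
      intervalIntegral.integral_comp_mul_left (fun u => Real.sqrt ((t/2)^2 - u^2)) hc
    simp only [h2] at h3
    rw [intervalIntegral.integral_const_mul, integral_sqrt_one_sub_sq] at h3
    have e1 : (0 - t/2 : ℝ) = t/2 * -1 := by ring
    have e2 : (t - t/2 : ℝ) = t/2 * 1 := by ring
    rw [e1, e2]
    rw [smul_eq_mul] at h3
    linear_combination (-(t/2)) * h3 - (∫ u in (t/2 * -1)..(t/2 * 1), Real.sqrt ((t/2)^2 - u^2)) * mul_inv_cancel₀ hc

lemma varpi_nonneg : ∀ (m : ℕ) (t : ℝ), 0 ≤ t → 0 ≤ varpi (m + 1) t := by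
  intro m
  induction m with
  | zero =>
    intro t ht
    show (0:ℝ) ≤ Real.sqrt t * Real.exp (-t)
    positivity
  | succ k ih =>
    intro t ht
    show (0:ℝ) ≤ rconv (varpi (k + 1)) (fun s => Real.sqrt s * Real.exp (-((k : ℝ) + 2) * s)) t
    apply intervalIntegral.integral_nonneg ht
    intro y hy
    have h1 : 0 ≤ varpi (k + 1) (t - y) := ih (t - y) (by linarith [hy.2])
    have h2 : 0 ≤ Real.sqrt y * Real.exp (-((k : ℝ) + 2) * y) := by positivity
    exact mul_nonneg h1 h2

/-- The general convolution estimate. -/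
lemma conv_step (f : ℝ → ℝ) (C p c : ℝ) (hC : 0 ≤ C) (hp : (1:ℝ)/2 ≤ p) (hc : 1 ≤ c)
    (hf0 : ∀ s : ℝ, 0 ≤ s → 0 ≤ f s)
    (hf : ∀ s : ℝ, 0 ≤ s → f s ≤ C * s ^ p * Real.exp (-s)) :
    ∀ t : ℝ, 0 ≤ t →
      rconv f (fun y => Real.sqrt y * Real.exp (-c * y)) t
        ≤ C * (Real.pi / 8) * t ^ (p + 3/2) * Real.exp (-t) := by
  intro t ht
  rcases eq_or_lt_of_le ht with h | htpos
  · have : rconv f (fun y => Real.sqrt y * Real.exp (-c * y)) t = 0 := by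
      rw [← h]; simp [rconv]
    rw [this]
    have : (0:ℝ) ^ (p + 3/2) = 0 := Real.zero_rpow (by linarith)
    rw [← h, this]
    simp
  · set K : ℝ := C * t ^ (p - 1/2) * Real.exp (-t) with hK
    have hKnn : 0 ≤ K := by positivity
    have hbound : ∀ y ∈ Set.Ioc (0:ℝ) t,
        f (t - y) * (Real.sqrt y * Real.exp (-c * y))
          ≤ K * (Real.sqrt (t - y) * Real.sqrt y) := by
      intro y hy
      have hy0 : 0 < y := hy.1
      have hyt : y ≤ t := hy.2
      have hty : 0 ≤ t - y := by linarith
      have h1 : f (t - y) ≤ C * (t - y) ^ p * Real.exp (-(t - y)) := hf _ hty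
      have h2 : (t - y) ^ p ≤ t ^ (p - 1/2) * Real.sqrt (t - y) := by
        have e : (t - y) ^ p = (t - y) ^ (p - 1/2) * (t - y) ^ ((1:ℝ)/2) := by
          rw [← Real.rpow_add_of_nonneg hty (by linarith) (by norm_num)]
          norm_num
        rw [e]
        calc (t - y) ^ (p - 1/2) * (t - y) ^ ((1:ℝ)/2)
            ≤ t ^ (p - 1/2) * (t - y) ^ ((1:ℝ)/2) := by
              apply mul_le_mul_of_nonneg_right
              · exact Real.rpow_le_rpow hty (by linarith) (by linarith)
              · positivity
          _ = t ^ (p - 1/2) * Real.sqrt (t - y) := by rw [Real.sqrt_eq_rpow]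
      have h3 : Real.exp (-(t - y)) * Real.exp (-c * y) ≤ Real.exp (-t) := by
        rw [← Real.exp_add]
        apply Real.exp_le_exp.2
        nlinarith
      calc f (t - y) * (Real.sqrt y * Real.exp (-c * y))
          ≤ (C * (t - y) ^ p * Real.exp (-(t - y))) * (Real.sqrt y * Real.exp (-c * y)) := by
            apply mul_le_mul_of_nonneg_right h1; positivity
        _ = (C * (t - y) ^ p * Real.sqrt y) * (Real.exp (-(t - y)) * Real.exp (-c * y)) := by
            ring
        _ ≤ (C * (t - y) ^ p * Real.sqrt y) * Real.exp (-t) := by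
            apply mul_le_mul_of_nonneg_left h3; positivity
        _ ≤ (C * (t ^ (p - 1/2) * Real.sqrt (t - y)) * Real.sqrt y) * Real.exp (-t) := by
            gcongr
        _ = K * (Real.sqrt (t - y) * Real.sqrt y) := by rw [hK]; ring
    have hgcont : Continuous (fun y : ℝ => K * (Real.sqrt (t - y) * Real.sqrt y)) := by
      continuity
    have hgi : IntegrableOn (fun y : ℝ => K * (Real.sqrt (t - y) * Real.sqrt y))
        (Set.Ioc (0:ℝ) t) := hgcont.integrableOn_Ioc
    have hle : rconv f (fun y => Real.sqrt y * Real.exp (-c * y)) t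
        ≤ ∫ y in Set.Ioc (0:ℝ) t, K * (Real.sqrt (t - y) * Real.sqrt y) := by
      rw [rconv, intervalIntegral.integral_of_le ht]
      apply integral_mono_of_nonneg
      · filter_upwards [ae_restrict_mem measurableSet_Ioc] with y hy
        have h1 : 0 ≤ f (t - y) := hf0 _ (by linarith [hy.2])
        have h2 : 0 ≤ Real.sqrt y * Real.exp (-c * y) := by positivity
        exact mul_nonneg h1 h2
      · exact hgi
      · filter_upwards [ae_restrict_mem measurableSet_Ioc] with y hy
        exact hbound y hy
    have heq : ∫ y in Set.Ioc (0:ℝ) t, K * (Real.sqrt (t - y) * Real.sqrt y)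
        = K * (Real.pi / 8 * t ^ 2) := by
      rw [← intervalIntegral.integral_of_le ht, intervalIntegral.integral_const_mul,
        key_integral t ht]
    rw [heq] at hle
    refine hle.trans (le_of_eq ?_)
    have hpow : t ^ (p - 1/2) * t ^ 2 = t ^ (p + 3/2) := by
      rw [← Real.rpow_natCast t 2, ← Real.rpow_add htpos]
      congr 1; push_cast; ring
    rw [hK, ← hpow]; ring

theorem stmt11 (m : ℕ) (hm : 2 ≤ m) :
    ∀ t : ℝ, 0 ≤ t →
      varpi m t ≤ (Real.pi / 8) ^ (m - 1) * t ^ ((3 * (m : ℝ) - 2) / 2) * Real.exp (-t) := by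
  induction m, hm using Nat.le_induction with
  | base =>
    intro t ht
    have h2 : varpi 2 = rconv (varpi 1)
        (fun s => Real.sqrt s * Real.exp (-((0:ℕ) + 2 : ℝ) * s)) := rfl
    have := conv_step (varpi 1) 1 (1/2) 2 (by norm_num) (le_refl _) (by norm_num)
      (fun s hs => by
        show (0:ℝ) ≤ Real.sqrt s * Real.exp (-s); positivity)
      (fun s hs => by
        show Real.sqrt s * Real.exp (-s) ≤ 1 * s ^ ((1:ℝ)/2) * Real.exp (-s)
        rw [one_mul, Real.sqrt_eq_rpow]) t ht
    rw [h2]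
    have hcast : ((0:ℕ) + 2 : ℝ) = 2 := by norm_num
    rw [hcast]
    have e1 : (2:ℕ) - 1 = 1 := rfl
    have e2 : (3 * ((2:ℕ):ℝ) - 2) / 2 = (1:ℝ)/2 + 3/2 := by norm_num
    rw [e1, pow_one, e2]
    linarith [this]
  | succ n hn ih =>
    intro t ht
    obtain ⟨k, rfl⟩ : ∃ k, n = k + 2 := ⟨n - 2, by omega⟩
    have hrec : varpi (k + 2 + 1) = rconv (varpi (k + 2))
        (fun s => Real.sqrt s * Real.exp (-((k + 1 : ℕ) + 2 : ℝ) * s)) := rfl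
    set C : ℝ := (Real.pi / 8) ^ (k + 2 - 1) with hC
    have hCnn : 0 ≤ C := by positivity
    set p : ℝ := (3 * ((k:ℝ) + 2) - 2) / 2 with hp
    have hp2 : (1:ℝ)/2 ≤ p := by rw [hp]; nlinarith [Nat.cast_nonneg (α := ℝ) k]
    have hstep := conv_step (varpi (k + 2)) C p (((k:ℝ) + 1) + 2) hCnn hp2
      (by nlinarith [Nat.cast_nonneg (α := ℝ) k])
      (fun s hs => varpi_nonneg (k + 1) s hs)
      (fun s hs => by
        have := ih s hs
        push_cast at this ⊢
        convert this using 3) t ht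
    rw [hrec]
    have hcast2 : ((k + 1 : ℕ) + 2 : ℝ) = ((k:ℝ) + 1) + 2 := by push_cast; ring
    rw [hcast2]
    refine hstep.trans (le_of_eq ?_)
    have hexp : p + 3/2 = (3 * ((k:ℝ) + 2 + 1) - 2) / 2 := by rw [hp]; ring
    have hcoef : C * (Real.pi / 8) = (Real.pi / 8) ^ (k + 2 + 1 - 1) := by
      rw [hC]
      have : k + 2 + 1 - 1 = (k + 2 - 1) + 1 := by omega
      rw [this, pow_succ]
    rw [hexp, hcoef]
    push_cast
    ring_nf
end
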